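/- For all n and k with n ≥ k > 2 there exists a U-cycle for the set of non-surjective words of length n over a k-letter alphabet, i.e., the set of functions from Fin n to Fin k that are not surjective (n-letter words with at least one letter of the alphabet missing). -/

import Mathlib

namespace UCycleAux
variable {n k : ℕ}

abbrev Word (n k : ℕ) := Fin n → Fin k

/-- `w'` can follow `w`: the length-(n-1) suffix of `w` equals the prefix of `w'`. -/
def Compat (w w' : Word n k) : Prop :=
  ∀ i : Fin n, (h : i.val + 1 < n) → w ⟨i.val + 1, h⟩ = w' i

/-- `w` and `w'` have the same length-(n-1) prefix. -/
def PrefEq (w w' : Word n k) : Prop :=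
  ∀ i : Fin n, i.val + 1 < n → w i = w' i

theorem Compat.of_prefEq {a b c : Word n k} (h : Compat a b) (h' : PrefEq b c) :
    Compat a c := fun i hi => (h i hi).trans (h' i hi)

theorem PrefEq.symm {a b : Word n k} (h : PrefEq a b) : PrefEq b a :=
  fun i hi => (h i hi).symm

theorem fin_add_one (i : Fin n) (h : i.val + 1 < n) [NeZero n] :
    i + 1 = (⟨i.val + 1, h⟩ : Fin n) := by
  ext
  simp only [Fin.val_add, Fin.val_one']
  rw [Nat.mod_eq_of_lt (by omega : 1 < n)]
  exact Nat.mod_eq_of_lt h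

/-- cyclic rotation of a word -/
def rot [NeZero n] (w : Word n k) : Word n k := fun i => w (i + 1)

theorem rot_apply [NeZero n] (w : Word n k) (i : Fin n) (h : i.val + 1 < n) :
    rot w i = w ⟨i.val + 1, h⟩ := by
  unfold rot; rw [fin_add_one i h]

theorem compat_rot [NeZero n] (w : Word n k) : Compat w (rot w) := by
  intro i hi
  rw [rot_apply w i hi]

theorem prefEq_rot [NeZero n] (w : Word n k) {y : Word n k} (h : Compat w y) :
    PrefEq y (rot w) := fun i hi => ((h i hi).symm).trans (rot_apply w i hi).symm

theorem rot_injective [NeZero n] : Function.Injective (rot (n := n) (k := k)) := by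
  intro w w' h
  funext i
  have := congrFun h (i - 1)
  simpa [rot, sub_add_cancel] using this

theorem range_rot [NeZero n] (w : Word n k) : Set.range (rot w) = Set.range w := by
  have h : rot w = w ∘ (fun i : Fin n => i + 1) := rfl
  rw [h]
  exact Function.Surjective.range_comp
    (fun x => ⟨x - 1, by simp [sub_add_cancel]⟩) w

theorem not_surj_rot [NeZero n] {w : Word n k} (h : ¬ Function.Surjective w) :
    ¬ Function.Surjective (rot w) := by
  rw [← Set.range_eq_univ] at h ⊢
  rw [range_rot]; exact h

open Fin.NatCast in
theorem rot_iterate [NeZero n] (w : Word n k) (m : ℕ) :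
    rot^[m] w = fun i => w (i + (m : Fin n)) := by
  induction m with
  | zero => simp
  | succ m ih =>
    rw [Function.iterate_succ_apply', ih]
    funext i
    simp only [rot]
    congr 1
    push_cast
    abel

open Fin.NatCast in
theorem rot_iterate_n [NeZero n] (w : Word n k) : rot^[n] w = w := by
  rw [rot_iterate]
  funext i
  simp



/-- shift a new letter `c` in at the end of the word -/
def shiftIn (c : Fin k) (w : Word n k) : Word n k :=
  fun i => if h : i.val + 1 < n then w ⟨i.val + 1, h⟩ else c

theorem compat_shiftIn (c : Fin k) (w : Word n k) : Compat w (shiftIn c w) := by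
  intro i hi
  simp [shiftIn, hi]

theorem shiftIn_not_mem_range {c a : Fin k} {w : Word n k}
    (ha : a ∉ Set.range w) (hac : a ≠ c) : a ∉ Set.range (shiftIn c w) := by
  rintro ⟨i, hi⟩
  unfold shiftIn at hi
  split at hi
  · exact ha ⟨_, hi⟩
  · exact hac hi.symm

theorem shiftIn_iterate_not_mem_range {c a : Fin k} {w : Word n k}
    (ha : a ∉ Set.range w) (hac : a ≠ c) (j : ℕ) :
    a ∉ Set.range ((shiftIn c)^[j] w) := by
  induction j with
  | zero => simpa using ha
  | succ j ih =>
    rw [Function.iterate_succ_apply']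
    exact shiftIn_not_mem_range ih hac

theorem shiftIn_iterate_eq_const {c : Fin k} {w : Word n k} (j : ℕ) (i : Fin n)
    (h : n ≤ i.val + j) : (shiftIn c)^[j] w i = c := by
  induction j generalizing i with
  | zero => exact absurd i.isLt (by omega)
  | succ j ih =>
    rw [Function.iterate_succ_apply']
    by_cases h' : i.val + 1 < n
    · rw [show shiftIn c ((shiftIn c)^[j] w) i = (shiftIn c)^[j] w ⟨i.val + 1, h'⟩ from dif_pos h']
      exact ih _ (by simp; omega)
    · exact dif_neg h' 

theorem shiftIn_iterate_n (c : Fin k) (w : Word n k) :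
    (shiftIn c)^[n] w = fun _ => c := by
  funext i
  exact shiftIn_iterate_eq_const n i (by omega)

theorem shiftIn_range_subset (c : Fin k) (w : Word n k) :
    Set.range (shiftIn c w) ⊆ insert c (Set.range w) := by
  rintro x ⟨i, rfl⟩
  unfold shiftIn
  by_cases h : i.val + 1 < n
  · rw [dif_pos h]; exact Set.mem_insert_of_mem _ ⟨_, rfl⟩
  · rw [dif_neg h]; exact Set.mem_insert _ _

theorem shiftIn_iterate_range_subset (c : Fin k) (w : Word n k) (j : ℕ) :
    Set.range ((shiftIn c)^[j] w) ⊆ insert c (Set.range w) := by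
  induction j with
  | zero => simp [Set.subset_insert]
  | succ j ih =>
    rw [Function.iterate_succ_apply']
    exact (shiftIn_range_subset c _).trans (by
      intro x hx
      rcases hx with h | h
      · exact h ▸ Set.mem_insert _ _
      · exact ih h)


/-- a cyclically compatible list of words -/
def CycOK (L : List (Word n k)) : Prop :=
  ∀ (i : ℕ) (h : i < L.length),
    Compat (L[i]'h) (L[(i + 1) % L.length]'(Nat.mod_lt _ (by omega)))

theorem CycOK.rotate {L : List (Word n k)} (hL : CycOK L) (m : ℕ) :
    CycOK (L.rotate m) := by
  intro i h
  have h' : i < L.length := by simpa using h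
  have h0 : 0 < L.length := by omega
  simp only [List.getElem_rotate, List.length_rotate]
  have e2 : ((i + 1) % L.length + m) % L.length
      = ((i + m) % L.length + 1) % L.length := by
    rw [Nat.mod_add_mod, Nat.mod_add_mod]
    congr 1
    omega
  have := hL ((i + m) % L.length) (Nat.mod_lt _ h0)
  convert this using 2

theorem CycOK.append {L1 L2 : List (Word n k)} (h1 : CycOK L1) (h2 : CycOK L2)
    (hn1 : L1 ≠ []) (hn2 : L2 ≠ [])
    (hpre : PrefEq (L1[0]'(List.length_pos_iff.2 hn1)) (L2[0]'(List.length_pos_iff.2 hn2))) :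
    CycOK (L1 ++ L2) := by
  have l1pos : 0 < L1.length := List.length_pos_iff.2 hn1
  have l2pos : 0 < L2.length := List.length_pos_iff.2 hn2
  have hlen : (L1 ++ L2).length = L1.length + L2.length := List.length_append
  intro i h
  have h' : i < L1.length + L2.length := by omega
  rcases lt_trichotomy (i + 1) L1.length with hc | hc | hc
  · -- both indices inside L1
    have e : (i + 1) % (L1 ++ L2).length = i + 1 := by
      rw [hlen]; exact Nat.mod_eq_of_lt (by omega)
    simp only [e]
    rw [List.getElem_append_left (by omega : i < L1.length),
        List.getElem_append_left (by omega : i + 1 < L1.length)]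
    have := h1 i (by omega)
    simpa only [Nat.mod_eq_of_lt (show i + 1 < L1.length by omega)] using this
  · -- i is the last index of L1 ; next is head of L2
    have hi : i < L1.length := by omega
    have e : (i + 1) % (L1 ++ L2).length = L1.length := by
      rw [hlen, Nat.mod_eq_of_lt (by omega)]
      omega
    simp only [e]
    rw [List.getElem_append_left hi,
        List.getElem_append_right (le_refl L1.length)]
    simp only [Nat.sub_self]
    have hlast := h1 i hi
    simp only [show (i + 1) % L1.length = 0 by rw [hc]; simp] at hlast
    exact hlast.of_prefEq hpre
  · -- i in L2 part
    have hi2 : L1.length ≤ i := by omega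
    rcases lt_trichotomy (i + 1) (L1.length + L2.length) with hd | hd | hd
    · -- next still in L2
      have e : (i + 1) % (L1 ++ L2).length = i + 1 := by
        rw [hlen]; exact Nat.mod_eq_of_lt hd
      simp only [e]
      rw [List.getElem_append_right hi2, List.getElem_append_right (by omega : L1.length ≤ i + 1)]
      have := h2 (i - L1.length) (by omega)
      simp only [show i - L1.length + 1 = i + 1 - L1.length by omega] at this
      simp only [Nat.mod_eq_of_lt (show i + 1 - L1.length < L2.length by omega)] at this
      exact this
    · -- i is the global last index; wrap to head of L1
      have e : (i + 1) % (L1 ++ L2).length = 0 := by rw [hlen, hd]; simp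
      simp only [e]
      rw [List.getElem_append_right hi2, List.getElem_append_left l1pos]
      have hlast := h2 (i - L1.length) (by omega)
      simp only [show (i - L1.length + 1) % L2.length = 0 by
        rw [show i - L1.length + 1 = L2.length by omega]; simp] at hlast
      exact hlast.of_prefEq hpre.symm
    · omega


section Orbit
variable [NeZero n]

theorem exists_period (w : Word n k) : ∃ m, 0 < m ∧ rot^[m] w = w :=
  ⟨n, Nat.pos_of_ne_zero (NeZero.ne n), rot_iterate_n w⟩

noncomputable def period (w : Word n k) : ℕ := Nat.find (exists_period w)

theorem period_pos (w : Word n k) : 0 < period w := (Nat.find_spec (exists_period w)).1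

theorem rot_iterate_period (w : Word n k) : rot^[period w] w = w :=
  (Nat.find_spec (exists_period w)).2

theorem period_le (w : Word n k) : period w ≤ n :=
  Nat.find_min' _ ⟨Nat.pos_of_ne_zero (NeZero.ne n), rot_iterate_n w⟩

theorem period_min (w : Word n k) {m : ℕ} (h0 : 0 < m) (hm : m < period w) :
    rot^[m] w ≠ w := fun he => Nat.find_min (exists_period w) hm ⟨h0, he⟩

/-- the rotation orbit of `w`, listed starting from `rot w` and ending with `w` itself -/
noncomputable def orbitR (w : Word n k) : List (Word n k) :=
  (List.range (period w)).map (fun j => rot^[j + 1] w)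

theorem orbitR_length (w : Word n k) : (orbitR w).length = period w := by
  simp [orbitR]

theorem orbitR_ne_nil (w : Word n k) : orbitR w ≠ [] := by
  have := period_pos w
  simp [orbitR, List.range_eq_nil]
  omega

theorem orbitR_getElem (w : Word n k) (i : ℕ) (h : i < (orbitR w).length) :
    (orbitR w)[i]'h = rot^[i + 1] w := by
  simp [orbitR]

theorem orbitR_mem {w u : Word n k} :
    u ∈ orbitR w ↔ ∃ j, j < period w ∧ u = rot^[j + 1] w := by
  simp [orbitR, eq_comm]

theorem self_mem_orbitR (w : Word n k) : w ∈ orbitR w := by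
  rw [orbitR_mem]
  refine ⟨period w - 1, by have := period_pos w; omega, ?_⟩
  rw [show period w - 1 + 1 = period w by have := period_pos w; omega,
    rot_iterate_period]

theorem rot_mem_orbitR {w u : Word n k} (h : u ∈ orbitR w) : rot u ∈ orbitR w := by
  rw [orbitR_mem] at h ⊢
  obtain ⟨j, hj, rfl⟩ := h
  rcases eq_or_lt_of_le (Nat.succ_le_of_lt hj) with he | hlt
  · rw [Nat.succ_eq_add_one] at he
    refine ⟨0, period_pos w, ?_⟩
    rw [← Function.iterate_succ_apply' rot (j+1) w]
    simp only [Nat.succ_eq_add_one, Nat.zero_add]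
    rw [show j + 1 + 1 = period w + 1 by omega, Function.iterate_succ_apply' rot (period w) w,
      rot_iterate_period, Function.iterate_one]
  · rw [Nat.succ_eq_add_one] at hlt
    exact ⟨j + 1, hlt, by rw [← Function.iterate_succ_apply' rot (j+1) w]⟩

theorem mem_orbitR_nonsurj {w u : Word n k} (hw : ¬ Function.Surjective w)
    (h : u ∈ orbitR w) : ¬ Function.Surjective u := by
  rw [orbitR_mem] at h
  obtain ⟨j, hj, rfl⟩ := h
  clear hj
  induction (j + 1) with
  | zero => simpa
  | succ m ih =>
    rw [Function.iterate_succ_apply']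
    exact not_surj_rot ih

theorem orbitR_nodup (w : Word n k) : (orbitR w).Nodup := by
  refine List.Nodup.map_on ?_ List.nodup_range
  intro a ha b hb hab
  simp only [List.mem_range] at ha hb
  by_contra hne
  have key : ∀ a b : ℕ, a < b → b < period w →
      rot^[a + 1] w = rot^[b + 1] w → False := by
    intro a b hlt hb hab
    have : rot^[a + 1] (rot^[b - a] w) = rot^[a + 1] w := by
      rw [← Function.iterate_add_apply, show a + 1 + (b - a) = b + 1 by omega, hab]
    have h2 : rot^[b - a] w = w := (rot_injective.iterate (a + 1)) this
    exact period_min w (by omega) (by omega) h2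
  rcases lt_trichotomy a b with hc | hc | hc
  · exact key a b hc hb hab
  · exact hne hc
  · exact key b a hc ha hab.symm

theorem orbitR_cycOK (w : Word n k) : CycOK (orbitR w) := by
  intro i h
  rw [orbitR_getElem, orbitR_getElem]
  rw [orbitR_length] at h ⊢
  rcases eq_or_lt_of_le (Nat.succ_le_of_lt h) with he | hlt
  · rw [Nat.succ_eq_add_one] at he
    rw [show (i + 1) % period w = 0 by rw [he]; simp]
    have : rot^[i + 1] w = w := by rw [he, rot_iterate_period]
    rw [show (0:ℕ) + 1 = 1 by rfl]
    have h1 : rot^[1] w = rot (rot^[i+1] w) := by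
      rw [this]; rfl
    rw [h1]
    exact compat_rot _
  · rw [Nat.succ_eq_add_one] at hlt
    rw [Nat.mod_eq_of_lt hlt, Function.iterate_succ_apply' rot (i+1) w]
    exact compat_rot _

end Orbit

section Path

def wconst (n : ℕ) (c : Fin k) : Word n k := fun _ => c

theorem not_surj_iff {u : Word n k} :
    ¬ Function.Surjective u ↔ ∃ a, a ∉ Set.range u := by
  simp [Function.Surjective, Set.range, eq_comm]

theorem head?_append_left {α : Type*} {l l' : List α} {a : α} (h : l.head? = some a) :
    (l ++ l').head? = some a := by
  cases l <;> simp_all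

theorem getLast?_append_right {α : Type*} {l l' : List α} {a : α}
    (h : l'.getLast? = some a) (h2 : l' ≠ []) : (l ++ l').getLast? = some a := by
  rw [List.getLast?_append_of_ne_nil _ h2, h]

/-- the path obtained by repeatedly shifting in the letter `c` -/
def pathList (c : Fin k) (w : Word n k) (m : ℕ) : List (Word n k) :=
  (List.range (m + 1)).map (fun j => (shiftIn c)^[j] w)

theorem pathList_chain' (c : Fin k) (w : Word n k) (m : ℕ) :
    List.Chain' Compat (pathList c w m) := by
  rw [pathList, List.Chain', List.isChain_map, List.isChain_range_succ]
  intro i _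
  rw [Function.iterate_succ_apply']
  exact compat_shiftIn c _

theorem pathList_head (c : Fin k) (w : Word n k) (m : ℕ) :
    (pathList c w m).head? = some w := by
  simp [pathList, List.range_succ_eq_map]

theorem pathList_getLast (c : Fin k) (w : Word n k) (m : ℕ) :
    (pathList c w m).getLast? = some ((shiftIn c)^[m] w) := by
  simp [pathList, List.range_succ, List.getLast?_append]

theorem pathList_mem {c : Fin k} {w u : Word n k} {m : ℕ} (h : u ∈ pathList c w m) :
    ∃ j, u = (shiftIn c)^[j] w := by
  simp only [pathList, List.mem_map, List.mem_range] at h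
  obtain ⟨j, _, rfl⟩ := h
  exact ⟨j, rfl⟩

theorem pathList_ne_nil (c : Fin k) (w : Word n k) (m : ℕ) : pathList c w m ≠ [] := by
  simp [pathList, List.range_eq_nil]

/-- From every non-surjective word there is a compatible path of non-surjective words
ending at the constant-0 word. -/
theorem exists_path (hn : 0 < n) (hk : 2 < k) {w : Word n k}
    (hw : ¬ Function.Surjective w) :
    ∃ l : List (Word n k), List.Chain' Compat l ∧ l.head? = some w ∧
      l.getLast? = some (wconst n ⟨0, by omega⟩) ∧
      ∀ u ∈ l, ¬ Function.Surjective u := by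
  obtain ⟨a, ha⟩ := not_surj_iff.1 hw
  set c0 : Fin k := ⟨0, by omega⟩ with hc0
  set c1 : Fin k := ⟨1, by omega⟩ with hc1
  set c2 : Fin k := ⟨2, hk⟩ with hc2
  have e0 : (shiftIn c0)^[n] w = wconst n c0 := shiftIn_iterate_n c0 w
  by_cases hza : a = c0
  · -- `w` misses the letter 0: first shift in 1's, then 0's
    subst hza
    have e1 : (shiftIn c1)^[n] w = wconst n c1 := shiftIn_iterate_n c1 w
    have e2 : (shiftIn c0)^[n] (wconst n c1) = wconst n c0 := shiftIn_iterate_n c0 _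
    refine ⟨pathList c1 w n ++ pathList c0 (wconst n c1) n, ?_, ?_, ?_, ?_⟩
    · refine List.IsChain.append (pathList_chain' _ _ _) (pathList_chain' _ _ _) ?_
      intro x hx y hy
      rw [pathList_getLast] at hx
      rw [pathList_head] at hy
      simp only [Option.mem_def, Option.some.injEq] at hx hy
      subst hx; subst hy
      rw [e1]
      intro i hi
      rfl
    · exact head?_append_left (pathList_head _ _ _)
    · rw [getLast?_append_right _ (pathList_ne_nil _ _ _)]
      rw [pathList_getLast, e2]
    · intro u hu
      rcases List.mem_append.1 hu with h | h
      · obtain ⟨j, rfl⟩ := pathList_mem h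
        exact not_surj_iff.2 ⟨c0, shiftIn_iterate_not_mem_range ha
          (by rw [hc0, hc1]; intro hcc; simp [Fin.mk.injEq] at hcc) j⟩
      · obtain ⟨j, rfl⟩ := pathList_mem h
        refine not_surj_iff.2 ⟨c2, fun hmem => ?_⟩
        have := shiftIn_iterate_range_subset c0 (wconst n c1) j hmem
        rcases this with h' | h'
        · rw [hc0, hc2] at h'; simp [Fin.mk.injEq] at h'
        · obtain ⟨i, hi⟩ := h'
          rw [hc1, hc2] at hi; simp [wconst, Fin.mk.injEq] at hi
  · -- `w` misses a letter `a ≠ 0`: shift in 0's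
    refine ⟨pathList c0 w n, pathList_chain' _ _ _, pathList_head _ _ _, ?_, ?_⟩
    · rw [pathList_getLast, e0]
    · intro u hu
      obtain ⟨j, rfl⟩ := pathList_mem hu
      exact not_surj_iff.2 ⟨a, shiftIn_iterate_not_mem_range ha hza j⟩

end Path

section Main

/-- crossing lemma: a chain that starts outside `P` and ends inside `P`
has a consecutive crossing pair -/
theorem exists_crossing {α : Type*} {R : α → α → Prop} (P : α → Prop) :
    ∀ (l : List α) (x0 xl : α), List.Chain' R l → l.head? = some x0 →
      l.getLast? = some xl → ¬ P x0 → P xl →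
      ∃ x y, x ∈ l ∧ y ∈ l ∧ R x y ∧ ¬ P x ∧ P y := by
  intro l
  induction l with
  | nil => intro x0 xl _ h; simp at h
  | cons a t ih =>
    intro x0 xl hchain hhead hlast hx0 hxl
    simp only [List.head?_cons, Option.some.injEq] at hhead
    subst hhead
    cases t with
    | nil =>
      simp only [List.getLast?_singleton, Option.some.injEq] at hlast
      subst hlast
      exact absurd hxl hx0
    | cons b t' =>
      rw [List.Chain', List.isChain_cons_cons] at hchain
      by_cases hb : P b
      · exact ⟨a, b, List.mem_cons_self, List.mem_cons_of_mem _ List.mem_cons_self,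
          hchain.1, hx0, hb⟩
      · have hlast' : (b :: t').getLast? = some xl := by
          rw [← hlast]; rfl
        obtain ⟨x, y, hx, hy, hR, hPx, hPy⟩ :=
          ih b xl hchain.2 rfl hlast' hb hxl
        exact ⟨x, y, List.mem_cons_of_mem _ hx, List.mem_cons_of_mem _ hy, hR, hPx, hPy⟩

variable [NeZero n]

theorem rot_iterate_mem {L : List (Word n k)} (hcl : ∀ u ∈ L, rot u ∈ L)
    {u : Word n k} (hu : u ∈ L) (j : ℕ) : rot^[j] u ∈ L := by
  induction j with
  | zero => simpa
  | succ j ih => rw [Function.iterate_succ_apply']; exact hcl _ ih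

theorem mem_of_rot_iterate_mem {L : List (Word n k)} (hcl : ∀ u ∈ L, rot u ∈ L)
    {x : Word n k} {t : ℕ} (ht : t ≤ n) (h : rot^[t] x ∈ L) : x ∈ L := by
  have := rot_iterate_mem hcl h (n - t)
  rwa [← Function.iterate_add_apply, show n - t + t = n by omega, rot_iterate_n] at this

/-- The key extension step packaged as an induction. -/
theorem grow (hn : 0 < n) (hk : 2 < k) :
    ∀ (m : ℕ) (L : List (Word n k)),
      CycOK L → L.Nodup → (∀ u ∈ L, ¬ Function.Surjective u) →
      (∀ u ∈ L, rot u ∈ L) → (wconst n ⟨0, by omega⟩ ∈ L) →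
      Fintype.card (Word n k) ≤ L.length + m →
      ∃ L' : List (Word n k), CycOK L' ∧ L'.Nodup ∧
        (∀ u ∈ L', ¬ Function.Surjective u) ∧
        (∀ u : Word n k, ¬ Function.Surjective u → u ∈ L') := by
  intro m
  induction m with
  | zero =>
    intro L h1 h2 h3 _ _ hcard
    refine ⟨L, h1, h2, h3, fun u _ => ?_⟩
    have hc1 : L.toFinset.card = L.length := List.toFinset_card_of_nodup h2
    have : L.toFinset = Finset.univ := by
      apply Finset.eq_univ_of_card
      have := Finset.card_le_univ L.toFinset
      have : Fintype.card (Word n k) ≤ L.toFinset.card := by omega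
      omega
    rw [← List.mem_toFinset, this]
    exact Finset.mem_univ u
  | succ m ih =>
    intro L h1 h2 h3 h4 h5 hcard
    by_cases hall : ∀ u : Word n k, ¬ Function.Surjective u → u ∈ L
    · exact ⟨L, h1, h2, h3, hall⟩
    push_neg at hall
    obtain ⟨w, hw, hwL⟩ := hall
    -- get a path from w to the constant-0 word
    obtain ⟨l, hlchain, hlhead, hlast, hlns⟩ := exists_path hn hk hw
    -- find the crossing pair
    obtain ⟨x, y, hxl, -, hxy, hxL, hyL⟩ :=
      exists_crossing (fun u => u ∈ L) l w (wconst n ⟨0, by omega⟩)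
        hlchain hlhead hlast hwL h5
    have hxns : ¬ Function.Surjective x := hlns x hxl
    -- rotate L to start at y
    set L1 := L.rotate (L.idxOf y) with hL1
    have hL1len : L1.length = L.length := List.length_rotate _ _
    have hLne : L ≠ [] := List.ne_nil_of_mem hyL
    have hLpos : 0 < L.length := List.length_pos_iff.2 hLne
    have hL1ne : L1 ≠ [] := by
      intro hc
      rw [← List.length_eq_zero_iff] at hc
      omega
    have hL1_zero : L1[0]'(List.length_pos_iff.2 hL1ne) = y := by
      simp only [hL1, List.getElem_rotate]
      simp only [Nat.zero_add, Nat.mod_eq_of_lt (List.idxOf_lt_length_iff.2 hyL)]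
      exact List.getElem_idxOf _
    have hmemL1 : ∀ u : Word n k, u ∈ L1 ↔ u ∈ L := fun u => List.mem_rotate
    -- the orbit of x
    set L2 := orbitR x with hL2
    have hL2_zero : L2[0]'(List.length_pos_iff.2 (orbitR_ne_nil x)) = rot x := by
      simp only [hL2, orbitR_getElem, Nat.zero_add, Function.iterate_one]
    have hdisj : L1.Disjoint L2 := by
      intro u hu1 hu2
      rw [hmemL1] at hu1
      rw [hL2, orbitR_mem] at hu2
      obtain ⟨j, hj, rfl⟩ := hu2
      have : x ∈ L := mem_of_rot_iterate_mem h4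
        (le_trans (Nat.succ_le_of_lt hj) (period_le x)) hu1
      exact hxL this
    set newL := L1 ++ L2 with hnewL
    have hpre : PrefEq (L1[0]'(List.length_pos_iff.2 hL1ne))
        (L2[0]'(List.length_pos_iff.2 (orbitR_ne_nil x))) := by
      rw [hL1_zero, hL2_zero]
      exact prefEq_rot x hxy
    have hnew1 : CycOK newL := CycOK.append (h1.rotate _) (orbitR_cycOK x) hL1ne
      (orbitR_ne_nil x) hpre
    have hnew2 : newL.Nodup := by
      rw [hnewL, List.nodup_append]
      exact ⟨List.nodup_rotate.2 h2, orbitR_nodup x, fun a ha b hb hab => hdisj ha (hab ▸ hb)⟩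
    have hnew3 : ∀ u ∈ newL, ¬ Function.Surjective u := by
      intro u hu
      rcases List.mem_append.1 hu with h | h
      · exact h3 u ((hmemL1 u).1 h)
      · exact mem_orbitR_nonsurj hxns h
    have hnew4 : ∀ u ∈ newL, rot u ∈ newL := by
      intro u hu
      rcases List.mem_append.1 hu with h | h
      · exact List.mem_append_left _ ((hmemL1 _).2 (h4 u ((hmemL1 u).1 h)))
      · exact List.mem_append_right _ (rot_mem_orbitR h)
    have hnew5 : wconst n ⟨0, by omega⟩ ∈ newL :=
      List.mem_append_left _ ((hmemL1 _).2 h5)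
    have hnewlen : newL.length = L.length + (orbitR x).length := by
      rw [hnewL, List.length_append, hL1len]
    have : 0 < (orbitR x).length := List.length_pos_iff.2 (orbitR_ne_nil x)
    exact ih newL hnew1 hnew2 hnew3 hnew4 hnew5 (by omega)

end Main

section Window
variable [NeZero n]

/-- reading a window of length `n` in a cyclically compatible list recovers its words -/
theorem window_eq {L : List (Word n k)} (h1 : CycOK L) (hLpos : 0 < L.length) :
    ∀ (j : ℕ) (m : ℕ) (hm : m < L.length) (t : Fin n) (ht : t.val + j < n),
      (L[(m + j) % L.length]'(Nat.mod_lt _ hLpos)) t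
        = (L[m]'hm) ⟨t.val + j, ht⟩ := by
  intro j
  induction j with
  | zero =>
    intro m hm t ht
    simp only [Nat.add_zero]
    have hel : L[m % L.length]'(Nat.mod_lt _ hLpos) = L[m]'hm := by
      congr 1
      exact Nat.mod_eq_of_lt hm
    rw [hel]
  | succ j ih =>
    intro m hm t ht
    have hcomp := h1 ((m + j) % L.length) (Nat.mod_lt _ hLpos)
    have eidx : ((m + j) % L.length + 1) % L.length = (m + (j + 1)) % L.length := by
      rw [Nat.mod_add_mod]
      congr 1
    simp only [eidx] at hcomp
    have ht' : t.val + 1 < n := by omega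
    calc (L[(m + (j + 1)) % L.length]'(Nat.mod_lt _ hLpos)) t
        = (L[(m + j) % L.length]'(Nat.mod_lt _ hLpos)) ⟨t.val + 1, ht'⟩ :=
          (hcomp t ht').symm
      _ = (L[m]'hm) ⟨t.val + 1 + j, by omega⟩ :=
          ih m hm ⟨t.val + 1, ht'⟩ (by show t.val + 1 + j < n; omega)
      _ = (L[m]'hm) ⟨t.val + (j + 1), ht⟩ :=
          congrArg _ (Fin.ext (by show t.val + 1 + j = t.val + (j + 1); omega))

end Window
end UCycleAux

/-- A U-cycle for a finite set `S` of `n`-letter words over the alphabet `Fin k`. -/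
def IsUCycle {n k : ℕ} (S : Finset (Fin n → Fin k)) (s : ZMod S.card → Fin k) : Prop :=
  Set.BijOn (fun i : ZMod S.card => fun j : Fin n => s (i + ((j : ℕ) : ZMod S.card)))
    Set.univ ↑S

/-- For `n ≥ k > 2` there exists a U-cycle for the set of non-surjective `n`-letter words
over a `k`-letter alphabet (words with at least one letter of the alphabet missing). -/
theorem exists_ucycle_non_surjective (n k : ℕ) (hnk : n ≥ k) (hk : k > 2) :
    ∃ s : ZMod (Finset.univ.filter
        (fun w : Fin n → Fin k => ¬ Function.Surjective w)).card → Fin k,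
      IsUCycle (Finset.univ.filter (fun w : Fin n → Fin k => ¬ Function.Surjective w)) s := by
  classical
  open UCycleAux in
  have hn : 0 < n := by omega
  haveI : NeZero n := ⟨by omega⟩
  set S : Finset (Fin n → Fin k) :=
    Finset.univ.filter (fun w : Fin n → Fin k => ¬ Function.Surjective w) with hS
  have hSmem : ∀ w : Fin n → Fin k, w ∈ S ↔ ¬ Function.Surjective w := by
    intro w; simp [hS]
  set c0 : Fin k := ⟨0, by omega⟩ with hc0
  set c1 : Fin k := ⟨1, by omega⟩ with hc1
  -- the base cycle
  have hbase_ns : ¬ Function.Surjective (wconst n c0) := by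
    rw [not_surj_iff]
    refine ⟨c1, ?_⟩
    rintro ⟨i, hi⟩
    rw [hc0, hc1] at hi
    simp [wconst, Fin.mk.injEq] at hi
  have hbase_cyc : CycOK [wconst n c0] := by
    intro i hi
    have h0 : i = 0 := by simpa using hi
    subst h0
    have hel : [wconst n c0][(0 + 1) % [wconst n c0].length]'(Nat.mod_lt _ (by omega))
        = [wconst n c0][0]'(by simp) := by
      congr 1
      simp
    rw [hel]
    intro t ht
    rfl
  obtain ⟨L, hL1, hL2, hL3, hL4⟩ := grow hn hk (Fintype.card (Word n k)) [wconst n c0]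
    hbase_cyc (List.nodup_singleton _) (by simpa using hbase_ns)
    (by intro u hu
        simp only [List.mem_singleton] at hu
        subst hu
        exact List.mem_singleton_self _)
    (List.mem_singleton_self _) (by simp)
  -- identify the word set of L with S
  have htofin : L.toFinset = S := by
    ext u
    rw [List.mem_toFinset, hSmem]
    exact ⟨fun h => hL3 u h, fun h => hL4 u h⟩
  have hlenS : L.length = S.card := by
    rw [← htofin, List.toFinset_card_of_nodup hL2]
  -- `n ≤ S.card`
  have hnS : n ≤ S.card := by
    have hinj : Function.Injective (fun m : Fin n => (⟨fun i => if i = m then c1 else c0,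
        by rw [hSmem, not_surj_iff]
           refine ⟨⟨2, hk⟩, ?_⟩
           rintro ⟨i, hi⟩
           dsimp at hi
           split at hi <;> (rw [Fin.ext_iff] at hi; simp [hc0, hc1] at hi)⟩ : {x // x ∈ S})) := by
      intro a b hab
      by_contra hne
      have hval := congrFun (congrArg Subtype.val hab) a
      dsimp at hval
      rw [if_pos rfl, if_neg hne] at hval
      rw [Fin.ext_iff] at hval
      simp [hc0, hc1] at hval
    have := Fintype.card_le_of_injective _ hinj
    simpa [Fintype.card_coe] using this
  have hNpos : 0 < S.card := by omega
  haveI : NeZero S.card := ⟨by omega⟩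
  have hLpos : 0 < L.length := by omega
  -- define the u-cycle
  refine ⟨fun i : ZMod S.card => (L[i.val]'(by rw [hlenS]; exact ZMod.val_lt i)) ⟨0, hn⟩, ?_⟩
  unfold IsUCycle
  set F := (fun i : ZMod S.card => fun j : Fin n =>
    (L[(i + ((j : ℕ) : ZMod S.card)).val]'(by rw [hlenS]; exact ZMod.val_lt _)) ⟨0, hn⟩) with hF
  have hkey : ∀ i : ZMod S.card, F i = L[i.val]'(by rw [hlenS]; exact ZMod.val_lt i) := by
    intro i
    funext j
    have hval : (i + ((j : ℕ) : ZMod S.card)).val = (i.val + j.val) % L.length := by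
      rw [ZMod.val_add, ZMod.val_natCast, Nat.mod_eq_of_lt (by omega : j.val < S.card), hlenS]
    have hel : (L[(i + ((j : ℕ) : ZMod S.card)).val]'(by rw [hlenS]; exact ZMod.val_lt _))
        = L[(i.val + j.val) % L.length]'(Nat.mod_lt _ hLpos) := by
      congr 1
    show (L[(i + ((j : ℕ) : ZMod S.card)).val]'(by rw [hlenS]; exact ZMod.val_lt _)) ⟨0, hn⟩
      = _
    rw [hel]
    have hwin := window_eq hL1 hLpos j.val i.val (by rw [hlenS]; exact ZMod.val_lt i)
      ⟨0, hn⟩ (by show 0 + j.val < n; omega)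
    rw [hwin]
    exact congrArg _ (Fin.ext (by show 0 + j.val = j.val; omega))
  refine ⟨?_, ?_, ?_⟩
  · -- maps to S
    intro i _
    show F i ∈ (S : Set (Fin n → Fin k))
    rw [hkey i]
    have hm2 : (L[i.val]'(by rw [hlenS]; exact ZMod.val_lt i)) ∈ L.toFinset := by
      simpa using List.getElem_mem _
    rw [htofin] at hm2
    exact Finset.mem_coe.2 hm2
  · -- injective
    intro i _ i' _ he
    have h2 : (L[i.val]'(by rw [hlenS]; exact ZMod.val_lt i))
        = L[i'.val]'(by rw [hlenS]; exact ZMod.val_lt i') := by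
      rw [← hkey i, ← hkey i']; exact he
    have h3 := List.nodup_iff_injective_get.1 hL2
      (a₁ := ⟨i.val, by rw [hlenS]; exact ZMod.val_lt i⟩)
      (a₂ := ⟨i'.val, by rw [hlenS]; exact ZMod.val_lt i'⟩) (by simpa using h2)
    have h4 : i.val = i'.val := by simpa using h3
    exact ZMod.val_injective _ h4
  · -- surjective onto S
    intro u hu
    have hinj : Function.Injective F := by
      intro i i' he
      have h2 : (L[i.val]'(by rw [hlenS]; exact ZMod.val_lt i))
          = L[i'.val]'(by rw [hlenS]; exact ZMod.val_lt i') := by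
        rw [← hkey i, ← hkey i']; exact he
      have h3 := List.nodup_iff_injective_get.1 hL2
        (a₁ := ⟨i.val, by rw [hlenS]; exact ZMod.val_lt i⟩)
        (a₂ := ⟨i'.val, by rw [hlenS]; exact ZMod.val_lt i'⟩) (by simpa using h2)
      have h4 : i.val = i'.val := by simpa using h3
      exact ZMod.val_injective _ h4
    have himg : Finset.image F Finset.univ = S := by
      apply Finset.eq_of_subset_of_card_le
      · intro v hv
        simp only [Finset.mem_image] at hv
        obtain ⟨i, _, rfl⟩ := hv
        rw [hkey i]
        have hm2 : (L[i.val]'(by rw [hlenS]; exact ZMod.val_lt i)) ∈ L.toFinset := by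
          simpa using List.getElem_mem _
        rw [htofin] at hm2
        exact hm2
      · rw [Finset.card_image_of_injective _ hinj]
        simp [ZMod.card]
    have : u ∈ Finset.image F Finset.univ := by rw [himg]; exact_mod_cast hu
    simp only [Finset.mem_image] at this
    obtain ⟨i, _, hi⟩ := this
    exact ⟨i, Set.mem_univ i, hi⟩
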